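/- Let V : ℝⁿ → ℝ≥0 satisfy α₁(‖x‖) ≤ V(x) ≤ α₂(‖x‖) for all x with α₁, α₂ ∈ 𝒦∞, and suppose along solutions V(x(t+d)) − V(x(t)) ≤ −γ(‖x(t)‖) for some γ ∈ 𝒦. Then there exists a continuous positive definite function ρ : ℝ≥0 → ℝ≥0 with ρ(s) < s for all s > 0 and ρ(0) = 0 such that V(x(t+d)) ≤ ρ(V(x(t))) along the same solutions. In particular, ρ can be taken as ρ = id − ½·(γ ∘ α₂⁻¹). -/

import Mathlib

noncomputable section
open Set Filter
open scoped Topology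

def IsKFun (α : ℝ → ℝ) : Prop :=
  ContinuousOn α (Set.Ici 0) ∧ StrictMonoOn α (Set.Ici 0) ∧ α 0 = 0

def IsKInfFun (α : ℝ → ℝ) : Prop :=
  IsKFun α ∧ Filter.Tendsto α Filter.atTop Filter.atTop

/-- A 𝒦∞ function is surjective from `Ici 0` onto `Ici 0`. -/
lemma kinf_surj {α : ℝ → ℝ} (hα : IsKInfFun α) : ∀ s : ℝ, 0 ≤ s → ∃ r, 0 ≤ r ∧ α r = s := by
  obtain ⟨⟨hc, hm, h0⟩, htop⟩ := hα
  intro s hs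
  obtain ⟨R, hR0, hRs⟩ : ∃ R, 0 ≤ R ∧ s ≤ α R := by
    have h1 : ∀ᶠ r in atTop, s ≤ α r := htop.eventually_ge_atTop s
    have h2 : ∀ᶠ r in atTop, (0:ℝ) ≤ r := eventually_ge_atTop 0
    obtain ⟨R, hR1, hR2⟩ := (h2.and h1).exists
    exact ⟨R, hR1, hR2⟩
  have hsub : Icc (0:ℝ) R ⊆ Ici 0 := Icc_subset_Ici_self
  have hIVT := intermediate_value_Icc hR0 (hc.mono hsub)
  have hmem : s ∈ Icc (α 0) (α R) := by
    constructor
    · rw [h0]; exact hs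
    · exact hRs
  obtain ⟨r, hr, hrs⟩ := hIVT hmem
  exact ⟨r, hr.1, hrs⟩

/-- if `V` is sandwiched between 𝒦∞ functions of the norm and decreases by
`γ(‖x(t)‖)` over each time interval of length `d` along solutions, then there is a
continuous positive definite `ρ < id` with `V(x(t+d)) ≤ ρ(V(x(t)))`; in particular
`ρ = id − ½ (γ ∘ α₂⁻¹)` works. -/
theorem stmt0 {n : ℕ} (f : EuclideanSpace ℝ (Fin n) → EuclideanSpace ℝ (Fin n))
    (V : EuclideanSpace ℝ (Fin n) → ℝ) (α₁ α₂ γ : ℝ → ℝ) (d : ℝ) (hd : 0 < d)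
    (hα₁ : IsKInfFun α₁) (hα₂ : IsKInfFun α₂) (hγ : IsKFun γ)
    (hbound : ∀ y, α₁ ‖y‖ ≤ V y ∧ V y ≤ α₂ ‖y‖)
    (x : ℝ → EuclideanSpace ℝ (Fin n)) (hx : ∀ t, HasDerivAt x (f (x t)) t)
    (hdec : ∀ t ≥ (0:ℝ), V (x (t + d)) - V (x t) ≤ -γ ‖x t‖) :
    (∃ ρ : ℝ → ℝ, ContinuousOn ρ (Set.Ici 0) ∧ ρ 0 = 0 ∧
      (∀ s > (0:ℝ), 0 < ρ s ∧ ρ s < s) ∧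
      (∀ t ≥ (0:ℝ), V (x (t + d)) ≤ ρ (V (x t)))) ∧
    (∀ α₂inv : ℝ → ℝ, (∀ s ∈ Set.Ici (0:ℝ), α₂inv (α₂ s) = s) →
      (∀ s ∈ Set.Ici (0:ℝ), α₂ (α₂inv s) = s ∧ 0 ≤ α₂inv s) →
      ∀ t ≥ (0:ℝ), V (x (t + d)) ≤ V (x t) - γ (α₂inv (V (x t))) / 2) := by
  obtain ⟨⟨hα₂c, hα₂m, hα₂0⟩, hα₂top⟩ := hα₂
  obtain ⟨hγc, hγm, hγ0⟩ := hγ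
  obtain ⟨⟨hα₁c, hα₁m, hα₁0⟩, _⟩ := hα₁
  -- basic positivity facts
  have hγnn : ∀ s, 0 ≤ s → 0 ≤ γ s := by
    intro s hs
    rcases eq_or_lt_of_le hs with h | h
    · rw [← h, hγ0]
    · have := hγm (self_mem_Ici) hs h
      rw [hγ0] at this; exact this.le
  have hVnn : ∀ y, 0 ≤ V y := by
    intro y
    have h1 := (hbound y).1
    have h2 : α₁ 0 ≤ α₁ ‖y‖ := by
      rcases eq_or_lt_of_le (norm_nonneg y) with h | h
      · rw [h]
      · exact (hα₁m self_mem_Ici (norm_nonneg y) h).le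
    rw [hα₁0] at h2
    linarith
  -- the common key estimate, for any right inverse of α₂
  have key : ∀ i : ℝ → ℝ, (∀ s ∈ Set.Ici (0:ℝ), α₂ (i s) = s ∧ 0 ≤ i s) →
      ∀ t ≥ (0:ℝ), V (x (t + d)) ≤ V (x t) - γ (i (V (x t))) / 2 := by
    intro i hi t ht
    set v := V (x t) with hv
    have hv0 : 0 ≤ v := hVnn _
    obtain ⟨hiv, hiv0⟩ := hi v hv0
    have hle : i v ≤ ‖x t‖ := by
      by_contra h
      push_neg at h
      have := hα₂m (norm_nonneg _) hiv0 h
      rw [hiv] at this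
      exact absurd (hbound (x t)).2 (not_le.mpr this)
    have hγle : γ (i v) ≤ γ ‖x t‖ := by
      rcases eq_or_lt_of_le hle with h | h
      · rw [h]
      · exact (hγm hiv0 (norm_nonneg _) h).le
    have hγiv : 0 ≤ γ (i v) := hγnn _ hiv0
    have := hdec t ht
    have : V (x (t + d)) ≤ v - γ ‖x t‖ := by linarith
    linarith
  constructor
  · -- construct the inverse of α₂
    have surj := kinf_surj ⟨⟨hα₂c, hα₂m, hα₂0⟩, hα₂top⟩
    choose r hr0 hr using surj
    set inv : ℝ → ℝ := fun s => if h : 0 ≤ s then r s h else 0 with hinv_def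
    have hinvP : ∀ s ∈ Set.Ici (0:ℝ), α₂ (inv s) = s ∧ 0 ≤ inv s := by
      intro s hs
      have he : inv s = r s hs := by simp only [hinv_def]; rw [dif_pos (mem_Ici.mp hs)]
      rw [he]
      exact ⟨hr s hs, hr0 s hs⟩
    have hα₂nn : ∀ s, 0 ≤ s → 0 ≤ α₂ s := by
      intro s hs
      rcases eq_or_lt_of_le hs with h | h
      · rw [← h, hα₂0]
      · have := hα₂m self_mem_Ici hs h
        rw [hα₂0] at this; exact this.le
    have hinv_left : ∀ s, 0 ≤ s → inv (α₂ s) = s := by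
      intro s hs
      have h1 := hinvP (α₂ s) (hα₂nn s hs)
      exact hα₂m.injOn h1.2 hs h1.1
    have hinv0 : inv 0 = 0 := by
      have := hinv_left 0 le_rfl
      rwa [hα₂0] at this
    have hinvmono : StrictMonoOn inv (Set.Ici 0) := by
      intro a ha b hb hab
      by_contra h
      push_neg at h
      have h1 := hinvP a ha
      have h2 := hinvP b hb
      have : α₂ (inv b) ≤ α₂ (inv a) := by
        rcases eq_or_lt_of_le h with h' | h'
        · rw [h']
        · exact (hα₂m h2.2 h1.2 h').le
      rw [h1.1, h2.1] at this
      exact absurd hab (not_lt.mpr this)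
    have hinvpos : ∀ s, 0 < s → 0 < inv s := by
      intro s hs
      have := hinvmono self_mem_Ici hs.le hs
      rwa [hinv0] at this
    -- continuity of inv on Ici 0
    have hinvcont : ContinuousOn inv (Set.Ici 0) := by
      intro a ha
      rcases eq_or_lt_of_le (mem_Ici.mp ha) with h0 | h0
      · -- a = 0 : right continuity
        rw [← h0]
        have : ContinuousWithinAt inv (Set.Ici 0) 0 := by
          apply StrictMonoOn.continuousWithinAt_right_of_surjOn hinvmono
          · exact self_mem_nhdsWithin
          · intro b hb
            rw [hinv0] at hb
            exact ⟨α₂ b, hα₂nn b (le_of_lt hb), hinv_left b (le_of_lt hb)⟩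
        exact this
      · -- a > 0 : continuity at a
        have hnhds : Set.Ici (0:ℝ) ∈ 𝓝 a := Ici_mem_nhds h0
        have hca : ContinuousAt inv a := by
          apply StrictMonoOn.continuousAt_of_exists_between hinvmono hnhds
          · -- left: ∀ b < inv a, ∃ c ∈ Ici 0, inv c ∈ Ico b (inv a)
            intro b hb
            rcases lt_or_ge b 0 with hbneg | hbnn
            · exact ⟨0, self_mem_Ici, by rw [hinv0]; exact ⟨hbneg.le, hinvpos a h0⟩⟩
            · refine ⟨α₂ b, hα₂nn b hbnn, ?_⟩
              rw [hinv_left b hbnn]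
              exact ⟨le_rfl, hb⟩
          · -- right
            intro b hb
            have hbnn : 0 ≤ b := le_of_lt (lt_of_le_of_lt ((hinvP a h0.le).2) hb)
            refine ⟨α₂ b, hα₂nn b hbnn, ?_⟩
            rw [hinv_left b hbnn]
            exact ⟨hb, le_rfl⟩
        exact hca.continuousWithinAt
    -- define ρ
    refine ⟨fun s => max (s - γ (inv s) / 2) (s / 2), ?_, ?_, ?_, ?_⟩
    · -- continuity
      have h1 : ContinuousOn (fun s => γ (inv s)) (Set.Ici 0) := by
        apply ContinuousOn.comp hγc hinvcont
        intro s hs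
        exact (hinvP s hs).2
      exact continuous_max.comp_continuousOn
        ((continuousOn_id.sub (h1.div_const 2)).prodMk (continuousOn_id.div_const 2))
    · simp [hinv0, hγ0]
    · intro s hs
      constructor
      · exact lt_max_iff.mpr (Or.inr (by linarith))
      · apply max_lt
        · have hip := hinvpos s hs
          have : 0 < γ (inv s) := by
            have := hγm self_mem_Ici hip.le hip
            rwa [hγ0] at this
          linarith
        · linarith
    · intro t ht
      have h := key inv hinvP t ht
      calc V (x (t + d)) ≤ V (x t) - γ (inv (V (x t))) / 2 := h
        _ ≤ max (V (x t) - γ (inv (V (x t))) / 2) (V (x t) / 2) := le_max_left _ _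
  · intro α₂inv _ hright t ht
    exact key α₂inv hright t ht
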